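/- The graph on primes p ≡ 1 (mod 4), with p adjacent to q iff q is a quadratic residue mod p, satisfies property U: for any disjoint finite sets A, B of such primes there is a prime r ≡ 1 (mod 4), r ∉ A ∪ B, which is a quadratic residue mod every a ∈ A and a non-residue mod every b ∈ B. -/

import Mathlib

private lemma coprime_of_modEq' {k x n : ℕ} (h : k ≡ x [MOD n]) (hx : Nat.Coprime x n) :
    Nat.Coprime k n := by
  have h' : k % n = x % n := h
  have : Nat.gcd k n = Nat.gcd x n := by
    rw [Nat.gcd_comm k n, Nat.gcd_comm x n, Nat.gcd_rec n k, Nat.gcd_rec n x, h']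
  unfold Nat.Coprime
  rw [this]; exact hx

/-- The graph on primes ≡ 1 (mod 4), with p ~ q iff q is a QR mod p, has property U. -/
theorem prime_qr_graph_propertyU (A B : Finset ℕ)
    (hA : ∀ a ∈ A, a.Prime ∧ a % 4 = 1) (hB : ∀ b ∈ B, b.Prime ∧ b % 4 = 1)
    (hAB : Disjoint A B) :
    ∃ r : ℕ, r.Prime ∧ r % 4 = 1 ∧ r ∉ A ∧ r ∉ B ∧
      (∀ a ∈ A, IsSquare (r : ZMod a)) ∧ (∀ b ∈ B, ¬ IsSquare (r : ZMod b)) := by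
  classical
  -- facts about elements of A ∪ B
  have hAB' : ∀ p ∈ A ∪ B, p.Prime ∧ p % 4 = 1 := by
    intro p hp
    rcases Finset.mem_union.mp hp with h | h
    · exact hA p h
    · exact hB p h
  have hodd : ∀ p ∈ A ∪ B, p ≠ 2 := by
    intro p hp
    obtain ⟨hp1, hp2⟩ := hAB' p hp
    intro h; rw [h] at hp2; norm_num at hp2
  -- choose a nonsquare mod each b ∈ B
  have hns : ∀ b ∈ B, ∃ u : ZMod b, ¬ IsSquare u := by
    intro b hb
    obtain ⟨hbp, hb4⟩ := hB b hb
    haveI : Fact b.Prime := ⟨hbp⟩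
    have hchar : ringChar (ZMod b) ≠ 2 := by
      rw [ZMod.ringChar_zmod_n]
      intro h; rw [h] at hb4; norm_num at hb4
    exact FiniteField.exists_nonsquare hchar
  choose u hu using hns
  -- the target residues
  set x : ℕ → ℕ := fun n => if h : n ∈ B then
      (haveI : NeZero n := ⟨(hB n h).1.pos.ne'⟩; (u n h).val) else 1 with hxdef
  -- the CRT modulus
  set t : Finset ℕ := insert 4 (A ∪ B) with htdef
  have h4 : (4 : ℕ) ∉ A ∪ B := by
    intro h
    exact absurd (hAB' 4 h).1 (by norm_num)
  have h4B : (4 : ℕ) ∉ B := fun h => h4 (Finset.mem_union_right _ h)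
  have hs : ∀ i ∈ t, (id i : ℕ) ≠ 0 := by
    intro i hi
    rcases Finset.mem_insert.mp hi with h | h
    · simp [h]
    · exact (hAB' i h).1.pos.ne'
  have pp : (t : Set ℕ).Pairwise (Function.onFun Nat.Coprime id) := by
    intro i hi j hj hij
    have hi' : i = 4 ∨ i ∈ A ∪ B := Finset.mem_insert.mp hi
    have hj' : j = 4 ∨ j ∈ A ∪ B := Finset.mem_insert.mp hj
    have key : ∀ p ∈ A ∪ B, Nat.Coprime 4 p := by
      intro p hp
      have : Nat.Coprime 2 p := (Nat.coprime_primes Nat.prime_two (hAB' p hp).1).mpr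
        (fun h => hodd p hp h.symm)
      have h4eq : (4 : ℕ) = 2 ^ 2 := by norm_num
      rw [h4eq]; exact this.pow_left _
    rcases hi' with rfl | hi' <;> rcases hj' with rfl | hj'
    · exact absurd rfl hij
    · exact key j hj'
    · exact (key i hi').symm
    · exact (Nat.coprime_primes (hAB' i hi').1 (hAB' j hj').1).mpr hij
  obtain ⟨k, hk⟩ := Nat.chineseRemainderOfFinset x id t hs pp
  -- k is coprime to N = ∏ i in t, i
  set N : ℕ := ∏ i ∈ t, i with hNdef
  have hN0 : N ≠ 0 := by
    rw [hNdef]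
    exact Finset.prod_ne_zero_iff.mpr (fun i hi => hs i hi)
  haveI : NeZero N := ⟨hN0⟩
  have hcop : Nat.Coprime k N := by
    apply Nat.Coprime.prod_right
    intro i hi
    refine coprime_of_modEq' (hk i hi) ?_
    rcases Finset.mem_insert.mp hi with rfl | h
    · simp [hxdef, h4B, Nat.coprime_one_left]
    · rcases Finset.mem_union.mp h with hia | hib
      · have hiB : i ∉ B := Finset.disjoint_left.mp hAB hia
        simp only [hxdef, hiB, dif_neg]
        exact Nat.coprime_one_left _
      · haveI : NeZero i := ⟨(hB i hib).1.pos.ne'⟩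
        simp only [hxdef, hib, dif_pos]
        have hune : (u i hib) ≠ 0 := fun h => (hu i hib) (h ▸ IsSquare.zero)
        have hvne : (u i hib).val ≠ 0 := fun h => hune (ZMod.val_eq_zero _ |>.mp h)
        have hnd : ¬ i ∣ (u i hib).val :=
          Nat.not_dvd_of_pos_of_lt (Nat.pos_of_ne_zero hvne) (ZMod.val_lt _)
        exact (((hB i hib).1.coprime_iff_not_dvd).mpr hnd).symm
  have hunit : IsUnit ((k : ZMod N)) := (ZMod.isUnit_iff_coprime k N).mpr hcop
  -- Dirichlet
  set n₀ : ℕ := (A ∪ B).sup id with hn₀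
  obtain ⟨r, hrgt, hrp, hrmod⟩ := Nat.forall_exists_prime_gt_and_eq_mod hunit n₀
  have hrk : r ≡ k [MOD N] := (ZMod.natCast_eq_natCast_iff r k N).mp (by rw [hrmod])
  have hri : ∀ i ∈ t, r ≡ x i [MOD i] := by
    intro i hi
    exact ((hrk.of_dvd (Finset.dvd_prod_of_mem _ hi))).trans (hk i hi)
  have hnotmem : ∀ p ∈ A ∪ B, r ≠ p := by
    intro p hp h
    have : p ≤ n₀ := Finset.le_sup (f := id) hp
    omega
  refine ⟨r, hrp, ?_, ?_, ?_, ?_, ?_⟩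
  · have := hri 4 (Finset.mem_insert_self 4 _)
    have hx4 : x 4 = 1 := by simp [hxdef, h4B]
    rw [hx4] at this
    have : r % 4 = 1 % 4 := this
    simpa using this
  · intro h; exact hnotmem r (Finset.mem_union_left _ h) rfl
  · intro h; exact hnotmem r (Finset.mem_union_right _ h) rfl
  · intro a ha
    have hiB : a ∉ B := Finset.disjoint_left.mp hAB ha
    have := hri a (Finset.mem_insert_of_mem (Finset.mem_union_left _ ha))
    have hxa : x a = 1 := by simp [hxdef, hiB]
    rw [hxa] at this
    have : (r : ZMod a) = ((1 : ℕ) : ZMod a) := (ZMod.natCast_eq_natCast_iff _ _ _).mpr this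
    rw [this]; simp
  · intro b hb
    haveI : NeZero b := ⟨(hB b hb).1.pos.ne'⟩
    have := hri b (Finset.mem_insert_of_mem (Finset.mem_union_right _ hb))
    have hxb : x b = (u b hb).val := by simp [hxdef, hb]
    rw [hxb] at this
    have heq : (r : ZMod b) = u b hb := by
      have h1 : (r : ZMod b) = (((u b hb).val : ℕ) : ZMod b) :=
        (ZMod.natCast_eq_natCast_iff _ _ _).mpr this
      rw [h1, ZMod.natCast_val, ZMod.cast_id]
    rw [heq]
    exact hu b hb
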